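/- arXiv:2201.03610 — 4 statements merged into one kernel-verified Lean document; each statement's English description precedes it below -/
import Mathlib

section
/- Let d ≥ 3, let ψ : ℝ^d → ℂ^N be continuously differentiable, let ε > 0, and set φ := ψ/|ψ|_ε^{d/(d-1)}. Then at every point of ℝ^d: |∇φ|² |ψ|_ε² = |∇ψ|² / |ψ|_ε^{2/(d-1)} + |∇(|ψ|_ε^{(d-2)/(d-1)})|² · [ (d/(d-2))² |ψ|²/|ψ|_ε² − 2d(d-1)/(d-2)² ], where |∇f|² := Σ_{j=1}^d |∂_j f|². -/
open MeasureTheory Complex Filter ENNReal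

open scoped RealInnerProductSpace

noncomputable section

/-- `ℝ^d` with the Euclidean norm. -/
abbrev ESp (d : ℕ) := EuclideanSpace ℝ (Fin d)

/-- Spinor space `ℂ^N` with the Hermitian norm. -/
abbrev Spinor (N : ℕ) := EuclideanSpace ℂ (Fin N)

/-- Partial derivative in the `j`-th coordinate direction. -/
def pd {d : ℕ} {V : Type*} [NormedAddCommGroup V] [NormedSpace ℝ V]
    (j : Fin d) (f : ESp d → V) (x : ESp d) : V :=
  fderiv ℝ f x (EuclideanSpace.single j 1)

/-- `|∇f|² = ∑ⱼ |∂ⱼ f|²` for a vector-valued function `f`. -/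
def gradSq {d : ℕ} {V : Type*} [NormedAddCommGroup V] [NormedSpace ℝ V]
    (f : ESp d → V) (x : ESp d) : ℝ :=
  ∑ j, ‖pd j f x‖ ^ 2

/-- The regularized modulus `|ψ|_ε = √(|ψ|² + ε²)`. -/
def regMod {d N : ℕ} (ψ : ESp d → Spinor N) (ε : ℝ) (x : ESp d) : ℝ :=
  Real.sqrt (‖ψ x‖ ^ 2 + ε ^ 2)

/-- The pointwise identity for `|∇φ|²|ψ|_ε²` with
`φ = ψ/|ψ|_ε^{d/(d-1)}`, for a `C¹` spinor field `ψ`. -/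
theorem gradient_term_pointwise_identity
    (d : ℕ) (hd : 3 ≤ d) (N : ℕ) (hN : N = 2 ^ (d / 2))
    (ψ : ESp d → Spinor N) (hψ : ContDiff ℝ 1 ψ) (ε : ℝ) (hε : 0 < ε)
    (φ : ESp d → Spinor N)
    (hφ : φ = fun x => (1 / regMod ψ ε x ^ ((d : ℝ) / ((d : ℝ) - 1))) • ψ x) :
    ∀ x : ESp d,
      gradSq φ x * regMod ψ ε x ^ 2
        = gradSq ψ x / regMod ψ ε x ^ ((2 : ℝ) / ((d : ℝ) - 1))
          + gradSq (fun y => regMod ψ ε y ^ (((d : ℝ) - 2) / ((d : ℝ) - 1))) x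
            * ( ((d : ℝ) / ((d : ℝ) - 2)) ^ 2 * ‖ψ x‖ ^ 2 / regMod ψ ε x ^ 2
                - 2 * (d : ℝ) * ((d : ℝ) - 1) / ((d : ℝ) - 2) ^ 2 ) := by
  intro x
  set e : ℝ := (d : ℝ) with he
  have hd3 : (3 : ℝ) ≤ e := by rw [he]; exact_mod_cast hd
  have he1 : e - 1 ≠ 0 := by linarith
  have he2 : e - 2 ≠ 0 := by linarith
  set α : ℝ := e / (e - 1) with hα
  set β : ℝ := (e - 2) / (e - 1) with hβ
  set r : ℝ := regMod ψ ε x with hrdef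
  have hr : 0 < r := Real.sqrt_pos.2 (by positivity)
  -- derivative of ψ
  have hψd : HasFDerivAt ψ (fderiv ℝ ψ x) x :=
    (hψ.differentiable one_ne_zero x).hasFDerivAt
  set D := fderiv ℝ ψ x with hD
  -- derivative of regMod
  have hsq : HasFDerivAt (fun y => ‖ψ y‖ ^ 2 + ε ^ 2)
      (2 • (innerSL ℝ (ψ x)).comp D) x := hψd.norm_sq.add_const _
  have hsqrtr : HasDerivAt Real.sqrt (1 / (2 * r)) (‖ψ x‖ ^ 2 + ε ^ 2) := by
    simpa [hrdef, regMod] using Real.hasDerivAt_sqrt (x := ‖ψ x‖ ^ 2 + ε ^ 2) (by positivity)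
  set R : ESp d →L[ℝ] ℝ := (1 / (2 * r)) • (2 • (innerSL ℝ (ψ x)).comp D) with hR
  have hregMod : HasFDerivAt (regMod ψ ε) R x :=
    hsqrtr.comp_hasFDerivAt x hsq
  set a : Fin d → ℝ := fun j => pd j (regMod ψ ε) x with haDef
  set p : Fin d → Spinor N := fun j => pd j ψ x with hpDef
  have haR : ∀ j, R (EuclideanSpace.single j 1) = a j := by
    intro j
    rw [haDef]
    simp only [pd, hregMod.fderiv]
  have hainner : ∀ j, ⟪ψ x, p j⟫ = r * a j := by
    intro j
    rw [← haR j, hR]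
    simp only [ContinuousLinearMap.smul_apply, smul_eq_mul,
      ContinuousLinearMap.coe_smul', Pi.smul_apply, ContinuousLinearMap.coe_comp',
      Function.comp_apply, innerSL_apply_apply]
    field_simp [hpDef, pd]
    simp [hpDef, pd, hD, mul_comm]
  -- derivative of powers of regMod
  have hrpow : ∀ c : ℝ, HasFDerivAt (fun y => regMod ψ ε y ^ c)
      ((c * r ^ (c - 1)) • R) x := by
    intro c
    have h1 : HasDerivAt (fun t : ℝ => t ^ c) (c * r ^ (c - 1)) r :=
      Real.hasDerivAt_rpow_const (Or.inl hr.ne')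
    have := h1.comp_hasFDerivAt x hregMod
    simpa [Function.comp_def] using this
  have hpd_rpow : ∀ c : ℝ, ∀ j, pd j (fun y => regMod ψ ε y ^ c) x
      = (c * r ^ (c - 1)) * a j := by
    intro c j
    rw [pd, (hrpow c).fderiv]
    simp [haR j]
  -- derivative of φ
  have hφ' : φ = fun y => (regMod ψ ε y ^ (-α)) • ψ y := by
    rw [hφ]
    funext y
    have h0 : (0:ℝ) ≤ regMod ψ ε y := Real.sqrt_nonneg _
    rw [Real.rpow_neg h0, one_div]
  have hφd : HasFDerivAt φ
      ((r ^ (-α)) • D + (((-α) * r ^ (-α - 1)) • R).smulRight (ψ x)) x := by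
    rw [hφ']
    exact (hrpow (-α)).smul hψd
  have hpdφ : ∀ j, pd j φ x
      = (r ^ (-α)) • p j + ((-α) * r ^ (-α - 1) * a j) • ψ x := by
    intro j
    rw [pd, hφd.fderiv]
    simp [haR j, hpDef, pd, mul_assoc, hD]
  set m : ℝ := ‖ψ x‖ with hm
  have hnorm : ∀ j, ‖pd j φ x‖ ^ 2
      = (r ^ (-α)) ^ 2 * ‖p j‖ ^ 2
        + (α ^ 2 * (r ^ (-α - 1)) ^ 2 * m ^ 2
            - 2 * α * (r ^ (-α) * r ^ (-α - 1) * r)) * (a j) ^ 2 := by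
    intro j
    rw [hpdφ j, norm_add_sq_real, real_inner_smul_left, real_inner_smul_right,
      real_inner_comm (ψ x) (p j), hainner j, norm_smul, norm_smul]
    simp only [Real.norm_eq_abs, mul_pow, _root_.sq_abs]
    ring
  set S : ℝ := ∑ j, (a j) ^ 2 with hS
  have hgradφ : gradSq φ x = (r ^ (-α)) ^ 2 * gradSq ψ x
      + (α ^ 2 * (r ^ (-α - 1)) ^ 2 * m ^ 2
          - 2 * α * (r ^ (-α) * r ^ (-α - 1) * r)) * S := by
    rw [gradSq, Finset.sum_congr rfl (fun j _ => hnorm j), Finset.sum_add_distrib,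
      ← Finset.mul_sum, ← Finset.mul_sum, hS, gradSq]
  have hgradβ : gradSq (fun y => regMod ψ ε y ^ β) x
      = β ^ 2 * (r ^ (β - 1)) ^ 2 * S := by
    rw [gradSq]
    have : ∀ j, ‖pd j (fun y => regMod ψ ε y ^ β) x‖ ^ 2
        = (β ^ 2 * (r ^ (β - 1)) ^ 2) * (a j) ^ 2 := by
      intro j
      rw [hpd_rpow β j]
      simp only [Real.norm_eq_abs, mul_pow, _root_.sq_abs]
    rw [Finset.sum_congr rfl (fun j _ => this j), ← Finset.mul_sum, hS]
  rw [hgradφ, hgradβ]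
  -- rpow bookkeeping
  set X : ℝ := r ^ (-((2:ℝ) / (e - 1))) with hX
  set Y : ℝ := r ^ (-(2 * e / (e - 1))) with hY
  have pow2 : ∀ s : ℝ, (r ^ s) ^ 2 = r ^ (s + s) := by
    intro s
    rw [sq, ← Real.rpow_add hr]
  have pow2' : r ^ (2 : ℕ) = r ^ ((2 : ℝ)) := (Real.rpow_natCast r 2).symm
  have hA : (r ^ (-α)) ^ 2 * r ^ 2 = X := by
    rw [pow2, pow2', ← Real.rpow_add hr, hX]
    congr 1
    rw [hα]; field_simp; ring
  have hB : (r ^ (-α) * r ^ (-α - 1) * r) * r ^ 2 = X := by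
    rw [pow2', ← Real.rpow_add hr, ← Real.rpow_add_one hr.ne', ← Real.rpow_add hr, hX]
    congr 1
    rw [hα]; field_simp; ring
  have hC : (r ^ (-α - 1)) ^ 2 * r ^ 2 = Y := by
    rw [pow2, pow2', ← Real.rpow_add hr, hY]
    congr 1
    rw [hα]; field_simp; ring
  have hD2 : (r ^ (β - 1)) ^ 2 = X := by
    rw [pow2, hX]
    congr 1
    rw [hβ]; field_simp; ring
  have hE : (r ^ (β - 1)) ^ 2 / r ^ 2 = Y := by
    rw [pow2, pow2', ← Real.rpow_sub hr, hY]
    congr 1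
    rw [hβ]; field_simp; ring
  have hdiv : gradSq ψ x / r ^ ((2:ℝ) / (e - 1)) = gradSq ψ x * X := by
    rw [hX, Real.rpow_neg hr.le, div_eq_mul_inv]
  have expand1 :
      ((r ^ (-α)) ^ 2 * gradSq ψ x
        + (α ^ 2 * (r ^ (-α - 1)) ^ 2 * m ^ 2
            - 2 * α * (r ^ (-α) * r ^ (-α - 1) * r)) * S) * r ^ 2
      = gradSq ψ x * ((r ^ (-α)) ^ 2 * r ^ 2)
        + α ^ 2 * m ^ 2 * S * ((r ^ (-α - 1)) ^ 2 * r ^ 2)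
        - 2 * α * S * ((r ^ (-α) * r ^ (-α - 1) * r) * r ^ 2) := by ring
  have expand2 :
      β ^ 2 * (r ^ (β - 1)) ^ 2 * S
          * ((e / (e - 2)) ^ 2 * m ^ 2 / r ^ 2 - 2 * e * (e - 1) / (e - 2) ^ 2)
      = β ^ 2 * (e / (e - 2)) ^ 2 * m ^ 2 * S * ((r ^ (β - 1)) ^ 2 / r ^ 2)
        - β ^ 2 * (2 * e * (e - 1) / (e - 2) ^ 2) * S * (r ^ (β - 1)) ^ 2 := by
    ring
  rw [expand1, hdiv, expand2, hA, hB, hC, hE, hD2]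
  have c1 : α ^ 2 = β ^ 2 * (e / (e - 2)) ^ 2 := by
    rw [hα, hβ]; field_simp
  have c2 : 2 * α = β ^ 2 * (2 * e * (e - 1) / (e - 2) ^ 2) := by
    rw [hα, hβ]; field_simp
  linear_combination m ^ 2 * S * Y * c1 - S * X * c2
end
end

section
/- Let d ≥ 3, let ψ : ℝ^d → ℂ^N be continuously differentiable, let ε > 0, and set φ := ψ/|ψ|_ε^{d/(d-1)}. Then at every point of ℝ^d: |γ·(-i∇)φ|² |ψ|_ε² = |γ·(-i∇)ψ|² / |ψ|_ε^{2/(d-1)} + (d/(d-2))² |∇(|ψ|_ε^{(d-2)/(d-1)})|² · |ψ|²/|ψ|_ε² − (2d/(d-1)) |ψ|_ε^{-2/(d-1)-1} · Re⟨ γ·(∇|ψ|_ε) ψ , γ·(-i∇)ψ·i ⟩, where γ·(∇|ψ|_ε)ψ := Σ_j (∂_j |ψ|_ε) γ_j ψ and the last term equals −(2d/(d-1)) |ψ|_ε^{-2/(d-1)-1} Re⟨ Σ_j (∂_j|ψ|_ε) γ_j ψ , Σ_k γ_k ∂_k ψ ⟩. -/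
open MeasureTheory Complex Filter ENNReal
open scoped InnerProductSpace

noncomputable section

/-- Action of an `N × N` complex matrix on a spinor. -/
def mulVecE {N : ℕ} (M : Matrix (Fin N) (Fin N) ℂ) (v : Spinor N) : Spinor N :=
  Matrix.toEuclideanLin M v

/-- The Dirac operator `γ·(-i∇)ψ = ∑ⱼ γⱼ (-i ∂ⱼ ψ)`. -/
def dirac {d N : ℕ} (γ : Fin d → Matrix (Fin N) (Fin N) ℂ)
    (ψ : ESp d → Spinor N) (x : ESp d) : Spinor N :=
  ∑ j, mulVecE (γ j) ((-Complex.I) • pd j ψ x)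

namespace SpinAux

variable {d N : ℕ}

lemma mulVecE_addv (M : Matrix (Fin N) (Fin N) ℂ) (u v : Spinor N) :
    mulVecE M (u + v) = mulVecE M u + mulVecE M v := map_add _ _ _

lemma mulVecE_smulC (M : Matrix (Fin N) (Fin N) ℂ) (c : ℂ) (v : Spinor N) :
    mulVecE M (c • v) = c • mulVecE M v := map_smul _ _ _

lemma mulVecE_mul (A B : Matrix (Fin N) (Fin N) ℂ) (v : Spinor N) :
    mulVecE (A * B) v = mulVecE A (mulVecE B v) := by
  simp [mulVecE, Matrix.toEuclideanLin_apply, Matrix.mulVec_mulVec]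

lemma mulVecE_addM (A B : Matrix (Fin N) (Fin N) ℂ) (v : Spinor N) :
    mulVecE (A + B) v = mulVecE A v + mulVecE B v := by
  simp [mulVecE, map_add]

lemma mulVecE_smul_one (c : ℂ) (v : Spinor N) : mulVecE (c • (1 : Matrix (Fin N) (Fin N) ℂ)) v = c • v := by
  simp [mulVecE, Matrix.toEuclideanLin_apply, Matrix.smul_mulVec, Matrix.one_mulVec]

lemma mulVecE_zero (v : Spinor N) : mulVecE (0 : Matrix (Fin N) (Fin N) ℂ) v = 0 := by
  simp [mulVecE, map_zero]

lemma inner_mulVecE_left (A : Matrix (Fin N) (Fin N) ℂ) (hA : A.IsHermitian) (u v : Spinor N) :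
    ⟪mulVecE A u, v⟫_ℂ = ⟪u, mulVecE A v⟫_ℂ := by
  have h := Matrix.toEuclideanLin_conjTranspose_eq_adjoint A
  rw [hA.eq] at h
  have := LinearMap.adjoint_inner_left (Matrix.toEuclideanLin A) v u
  rw [← h] at this
  exact this

lemma re_inner_gamma (γ : Fin d → Matrix (Fin N) (Fin N) ℂ)
    (hherm : ∀ j, (γ j).IsHermitian)
    (hanti : ∀ j k, γ j * γ k + γ k * γ j = if j = k then (2 : ℂ) • 1 else 0)
    (j k : Fin d) (v : Spinor N) :
    (⟪mulVecE (γ j) v, mulVecE (γ k) v⟫_ℂ).re = if j = k then ‖v‖ ^ 2 else 0 := by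
  have h1 : ⟪mulVecE (γ j) v, mulVecE (γ k) v⟫_ℂ = ⟪v, mulVecE (γ j * γ k) v⟫_ℂ := by
    rw [inner_mulVecE_left _ (hherm j), mulVecE_mul]
  have h2 : ⟪mulVecE (γ k) v, mulVecE (γ j) v⟫_ℂ = ⟪v, mulVecE (γ k * γ j) v⟫_ℂ := by
    rw [inner_mulVecE_left _ (hherm k), mulVecE_mul]
  have hsym : (⟪mulVecE (γ j) v, mulVecE (γ k) v⟫_ℂ).re
      = (⟪mulVecE (γ k) v, mulVecE (γ j) v⟫_ℂ).re := by
    rw [← inner_conj_symm]; exact (Complex.conj_re _)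
  have hsum : (⟪v, mulVecE (γ j * γ k) v⟫_ℂ + ⟪v, mulVecE (γ k * γ j) v⟫_ℂ).re
      = if j = k then 2 * ‖v‖ ^ 2 else 0 := by
    rw [← inner_add_right, ← mulVecE_addM, hanti]
    split
    · rw [mulVecE_smul_one, inner_smul_right, inner_self_eq_norm_sq_to_K]
      have h : (RCLike.ofReal ‖v‖ : ℂ) = Complex.ofReal ‖v‖ := rfl
      rw [h]; norm_cast
    · simp [mulVecE_zero]
  have key : 2 * (⟪mulVecE (γ j) v, mulVecE (γ k) v⟫_ℂ).re
      = if j = k then 2 * ‖v‖ ^ 2 else 0 := by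
    rw [← hsum, Complex.add_re, ← h1, ← h2]
    rw [hsym]; ring
  split at key <;> split <;> first | linarith | simp_all

lemma clifford_norm_sq (γ : Fin d → Matrix (Fin N) (Fin N) ℂ)
    (hherm : ∀ j, (γ j).IsHermitian)
    (hanti : ∀ j k, γ j * γ k + γ k * γ j = if j = k then (2 : ℂ) • 1 else 0)
    (a : Fin d → ℝ) (v : Spinor N) :
    ‖∑ j, a j • mulVecE (γ j) v‖ ^ 2 = (∑ j, a j ^ 2) * ‖v‖ ^ 2 := by
  have h0 : ‖∑ j, a j • mulVecE (γ j) v‖ ^ 2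
      = (⟪∑ j, a j • mulVecE (γ j) v, ∑ k, a k • mulVecE (γ k) v⟫_ℂ).re := by
    simpa using (inner_self_eq_norm_sq (𝕜 := ℂ) (∑ j, a j • mulVecE (γ j) v)).symm
  rw [h0, sum_inner]
  rw [Complex.re_sum]
  have hterm : ∀ j, (⟪a j • mulVecE (γ j) v, ∑ k, a k • mulVecE (γ k) v⟫_ℂ).re
      = a j ^ 2 * ‖v‖ ^ 2 := by
    intro j
    rw [inner_sum, Complex.re_sum]
    have : ∀ k, (⟪a j • mulVecE (γ j) v, a k • mulVecE (γ k) v⟫_ℂ).re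
        = a j * a k * (if j = k then ‖v‖ ^ 2 else 0) := by
      intro k
      rw [RCLike.real_smul_eq_coe_smul (K := ℂ) (a j), RCLike.real_smul_eq_coe_smul (K := ℂ) (a k),
        inner_smul_real_left, inner_smul_real_right, Complex.smul_re, Complex.smul_re,
        re_inner_gamma γ hherm hanti j k v]
      simp [smul_eq_mul, mul_assoc]
    simp only [this]
    simp [Finset.sum_ite_eq, sq]
  simp only [hterm, Finset.sum_mul]

end SpinAux

/-- The pointwise identity for `|γ·(-i∇)φ|²|ψ|_ε²` with
`φ = ψ/|ψ|_ε^{d/(d-1)}`, for a `C¹` spinor field `ψ`. -/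
theorem dirac_term_pointwise_identity
    (d : ℕ) (hd : 3 ≤ d) (N : ℕ) (hN : N = 2 ^ (d / 2))
    (γ : Fin d → Matrix (Fin N) (Fin N) ℂ)
    (hherm : ∀ j, (γ j).IsHermitian)
    (hanti : ∀ j k, γ j * γ k + γ k * γ j = if j = k then (2 : ℂ) • 1 else 0)
    (ψ : ESp d → Spinor N) (hψ : ContDiff ℝ 1 ψ) (ε : ℝ) (hε : 0 < ε)
    (φ : ESp d → Spinor N)
    (hφ : φ = fun x => (1 / regMod ψ ε x ^ ((d : ℝ) / ((d : ℝ) - 1))) • ψ x) :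
    ∀ x : ESp d,
      ‖dirac γ φ x‖ ^ 2 * regMod ψ ε x ^ 2
        = ‖dirac γ ψ x‖ ^ 2 / regMod ψ ε x ^ ((2 : ℝ) / ((d : ℝ) - 1))
          + ((d : ℝ) / ((d : ℝ) - 2)) ^ 2
            * gradSq (fun y => regMod ψ ε y ^ (((d : ℝ) - 2) / ((d : ℝ) - 1))) x
            * ‖ψ x‖ ^ 2 / regMod ψ ε x ^ 2
          - (2 * (d : ℝ) / ((d : ℝ) - 1))
            * regMod ψ ε x ^ (-(2 : ℝ) / ((d : ℝ) - 1) - 1)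
            * (inner ℂ (∑ j, pd j (regMod ψ ε) x • mulVecE (γ j) (ψ x))
                     (∑ k, mulVecE (γ k) (pd k ψ x)) : ℂ).re := by
  intro x
  have hd3 : (3 : ℝ) ≤ (d : ℝ) := by exact_mod_cast hd
  have hd1 : ((d : ℝ) - 1) ≠ 0 := by linarith
  have hd2 : ((d : ℝ) - 2) ≠ 0 := by linarith
  set c : ℝ := (d : ℝ) / ((d : ℝ) - 1) with hcdef
  set β : ℝ := ((d : ℝ) - 2) / ((d : ℝ) - 1) with hβdef
  clear_value c β
  have hrpos : ∀ y, 0 < regMod ψ ε y := fun y => Real.sqrt_pos.2 (by positivity)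
  have hψd : ∀ y : ESp d, DifferentiableAt ℝ ψ y :=
    fun y => (hψ.differentiable one_ne_zero).differentiableAt
  -- differentiability of regMod
  have hrd : ∀ y, DifferentiableAt ℝ (regMod ψ ε) y := by
    intro y
    have hi : DifferentiableAt ℝ (fun z => (⟪ψ z, ψ z⟫_ℂ)) y :=
      (hψd y).inner ℂ (hψd y)
    have hre : DifferentiableAt ℝ (fun z => (⟪ψ z, ψ z⟫_ℂ).re + ε ^ 2) y := by
      exact ((Complex.reCLM.differentiable.differentiableAt).comp y hi).add_const _
    have heq : regMod ψ ε = fun z => Real.sqrt ((⟪ψ z, ψ z⟫_ℂ).re + ε ^ 2) := by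
      funext z
      have : (⟪ψ z, ψ z⟫_ℂ).re = ‖ψ z‖ ^ 2 := by
        simpa using inner_self_eq_norm_sq (𝕜 := ℂ) (ψ z)
      rw [regMod, this]
    rw [heq]
    apply hre.sqrt
    have : (⟪ψ y, ψ y⟫_ℂ).re = ‖ψ y‖ ^ 2 := by
      simpa using inner_self_eq_norm_sq (𝕜 := ℂ) (ψ y)
    rw [this]; positivity
  have hrx : 0 < regMod ψ ε x := hrpos x
  have hΨx : HasFDerivAt ψ (fderiv ℝ ψ x) x := (hψd x).hasFDerivAt
  have hRx : HasFDerivAt (regMod ψ ε) (fderiv ℝ (regMod ψ ε) x) x := (hrd x).hasFDerivAt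
  -- rewrite φ with a negative power
  have hφ' : φ = fun y => (regMod ψ ε y ^ (-c)) • ψ y := by
    rw [hφ]; funext y
    rw [one_div, ← Real.rpow_neg (hrpos y).le]
  have hsx : HasFDerivAt (fun y => regMod ψ ε y ^ (-c))
      ((-c * regMod ψ ε x ^ (-c - 1)) • fderiv ℝ (regMod ψ ε) x) x :=
    hRx.rpow_const (Or.inl hrx.ne')
  have hφx : HasFDerivAt φ
      ((regMod ψ ε x ^ (-c)) • fderiv ℝ ψ x
        + ((-c * regMod ψ ε x ^ (-c - 1)) • fderiv ℝ (regMod ψ ε) x).smulRight (ψ x)) x := by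
    rw [hφ']
    exact hsx.smul hΨx
  have hpdφ : ∀ j, pd j φ x
      = (regMod ψ ε x ^ (-c)) • pd j ψ x
        + ((-c * regMod ψ ε x ^ (-c - 1)) * pd j (regMod ψ ε) x) • ψ x := by
    intro j
    show fderiv ℝ φ x (EuclideanSpace.single j 1) = _
    rw [hφx.fderiv]
    simp only [ContinuousLinearMap.add_apply, ContinuousLinearMap.coe_smul',
      Pi.smul_apply, ContinuousLinearMap.smulRight_apply, smul_eq_mul, pd]
  -- the key vectors
  set W : Spinor N := ∑ j, pd j (regMod ψ ε) x • mulVecE (γ j) (ψ x) with hWdef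
  set V : Spinor N := ∑ k, mulVecE (γ k) (pd k ψ x) with hVdef
  set P : ℝ := (inner ℂ W V : ℂ).re with hPdef
  set D2 : ℝ := ‖dirac γ ψ x‖ ^ 2 with hD2def
  set n2 : ℝ := ‖ψ x‖ ^ 2 with hn2def
  set S : ℝ := ∑ j, (pd j (regMod ψ ε) x) ^ 2 with hSdef
  have hDψ : dirac γ ψ x = (-Complex.I) • V := by
    rw [hVdef, dirac, Finset.smul_sum]
    exact Finset.sum_congr rfl fun j _ => SpinAux.mulVecE_smulC _ _ _
  -- decomposition of dirac of φ
  have hDφ : dirac γ φ x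
      = (regMod ψ ε x ^ (-c)) • dirac γ ψ x
        + (c * regMod ψ ε x ^ (-c - 1)) • (Complex.I • W) := by
    rw [dirac, dirac, hWdef]
    simp only [Finset.smul_sum, ← Finset.sum_add_distrib]
    refine Finset.sum_congr rfl fun j _ => ?_
    rw [hpdφ j, smul_add, SpinAux.mulVecE_addv]
    simp only [RCLike.real_smul_eq_coe_smul (K := ℂ), smul_smul, SpinAux.mulVecE_smulC]
    match_scalars <;> push_cast <;> ring
  -- Clifford identity for ‖W‖²
  have hW2 : ‖W‖ ^ 2 = S * n2 := by
    rw [hWdef, hSdef, hn2def]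
    exact SpinAux.clifford_norm_sq γ hherm hanti _ (ψ x)
  -- cross term
  have hcross : (⟪dirac γ ψ x, Complex.I • W⟫_ℂ).re = -P := by
    rw [hDψ, inner_smul_left, inner_smul_right]
    have h1 : (starRingEnd ℂ) (-Complex.I) * (Complex.I * ⟪V, W⟫_ℂ) = -⟪V, W⟫_ℂ := by
      rw [map_neg, Complex.conj_I, neg_neg, ← mul_assoc, Complex.I_mul_I, neg_one_mul]
    rw [h1, Complex.neg_re, hPdef]
    congr 1
    rw [← inner_conj_symm W V, Complex.conj_re]
  -- norms of real scalar multiples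
  have hsm : ∀ (t : ℝ) (v : Spinor N), ‖t • v‖ ^ 2 = t ^ 2 * ‖v‖ ^ 2 := fun t v => by
    rw [norm_smul, mul_pow, Real.norm_eq_abs, _root_.sq_abs]
  have hIW : ‖Complex.I • W‖ ^ 2 = ‖W‖ ^ 2 := by
    rw [norm_smul, Complex.norm_I, one_mul]
  -- the norm expansion
  have hnorm : ‖dirac γ φ x‖ ^ 2
      = (regMod ψ ε x ^ (-c)) ^ 2 * D2
        + c ^ 2 * (regMod ψ ε x ^ (-c - 1)) ^ 2 * (S * n2)
        - 2 * c * (regMod ψ ε x ^ (-c) * regMod ψ ε x ^ (-c - 1)) * P := by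
    rw [hDφ, norm_add_sq (𝕜 := ℂ)]
    rw [hsm, hsm, hIW, hW2]
    rw [RCLike.real_smul_eq_coe_smul (K := ℂ) (regMod ψ ε x ^ (-c)),
      RCLike.real_smul_eq_coe_smul (K := ℂ) (c * regMod ψ ε x ^ (-c - 1)),
      inner_smul_real_left, inner_smul_real_right, RCLike.re_to_complex,
      Complex.smul_re, Complex.smul_re, hcross]
    rw [hD2def]
    simp only [smul_eq_mul]
    ring
  -- gradient of the power of regMod
  have hgrad : gradSq (fun y => regMod ψ ε y ^ β) x
      = β ^ 2 * (regMod ψ ε x ^ (β - 1)) ^ 2 * S := by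
    have hpd : ∀ j, pd j (fun y => regMod ψ ε y ^ β) x
        = (β * regMod ψ ε x ^ (β - 1)) * pd j (regMod ψ ε) x := by
      intro j
      show fderiv ℝ _ x (EuclideanSpace.single j 1) = _
      rw [(hRx.rpow_const (p := β) (Or.inl hrx.ne')).fderiv]
      simp only [ContinuousLinearMap.coe_smul', Pi.smul_apply, smul_eq_mul, pd]
    rw [gradSq]
    simp only [hpd, Real.norm_eq_abs, _root_.sq_abs, mul_pow, ← Finset.mul_sum]
    rw [hSdef]
  -- final algebra
  rw [hnorm, hgrad]
  have hmul : ∀ u v : ℝ, regMod ψ ε x ^ u * regMod ψ ε x ^ v = regMod ψ ε x ^ (u + v) :=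
    fun u v => (Real.rpow_add hrx u v).symm
  have hnat : regMod ψ ε x ^ (2 : ℕ) = regMod ψ ε x ^ ((2 : ℝ)) := by
    rw [← Real.rpow_natCast (regMod ψ ε x) 2]; norm_num
  have hsq2 : ∀ u : ℝ, (regMod ψ ε x ^ u) ^ (2 : ℕ) = regMod ψ ε x ^ (2 * u) := by
    intro u
    rw [← Real.rpow_natCast (regMod ψ ε x ^ u) 2, ← Real.rpow_mul hrx.le]
    norm_num
    rw [mul_comm]
  have P1 : (regMod ψ ε x ^ (-c)) ^ 2 * regMod ψ ε x ^ 2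
      = (regMod ψ ε x ^ ((2 : ℝ) / ((d : ℝ) - 1)))⁻¹ := by
    rw [hsq2, hnat, hmul, ← Real.rpow_neg hrx.le]
    congr 1
    rw [hcdef]; field_simp; ring
  have P2 : (regMod ψ ε x ^ (-c - 1)) ^ 2 * regMod ψ ε x ^ 2
      = (regMod ψ ε x ^ (β - 1)) ^ 2 / regMod ψ ε x ^ 2 := by
    rw [hsq2, hsq2, hnat, hmul, div_eq_mul_inv, ← Real.rpow_neg hrx.le, hmul]
    congr 1
    rw [hcdef, hβdef]; field_simp; ring
  have P3 : regMod ψ ε x ^ (-c) * regMod ψ ε x ^ (-c - 1) * regMod ψ ε x ^ 2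
      = regMod ψ ε x ^ (-(2 : ℝ) / ((d : ℝ) - 1) - 1) := by
    rw [hmul, hnat, hmul]
    congr 1
    rw [hcdef]; field_simp; ring
  have C2 : ((d : ℝ) / ((d : ℝ) - 2)) ^ 2 * β ^ 2 = c ^ 2 := by
    rw [hcdef, hβdef, ← mul_pow]
    congr 1
    field_simp
  have C3 : 2 * (d : ℝ) / ((d : ℝ) - 1) = 2 * c := by
    rw [hcdef]; ring
  have hr2 : (regMod ψ ε x : ℝ) ^ 2 ≠ 0 := by positivity
  have hre : regMod ψ ε x ^ ((2 : ℝ) / ((d : ℝ) - 1)) ≠ 0 :=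
    (Real.rpow_pos_of_pos hrx _).ne'
  linear_combination D2 * P1 + c ^ 2 * S * n2 * P2 - 2 * c * P * P3
    - S * n2 * ((regMod ψ ε x ^ (β - 1)) ^ 2 / regMod ψ ε x ^ 2) * C2
    + P * regMod ψ ε x ^ (-(2 : ℝ) / ((d : ℝ) - 1) - 1) * C3
end
end

section
/- Let d ≥ 3 and let Φ : ℝ^d → ℂ^N be twice continuously differentiable and satisfy the twistor equation [−i∂_j − (1/d) γ_j γ·(-i∇)] Φ = 0 on ℝ^d for every j = 1,…,d. Then there exist constant spinors φ_0, φ_1 ∈ ℂ^N such that Φ(x) = φ_0 + (γ·x) φ_1 for all x ∈ ℝ^d. -/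
open MeasureTheory Complex Filter ENNReal

noncomputable section

/-- `γ·a = ∑ⱼ aⱼ γⱼ` for a real vector `a`. -/
def gdotR {d N : ℕ} (γ : Fin d → Matrix (Fin N) (Fin N) ℂ) (v : ESp d) :
    Matrix (Fin N) (Fin N) ℂ :=
  ∑ j, (v j : ℂ) • γ j

namespace TwAux

variable {N : ℕ}

def mulVecL (M : Matrix (Fin N) (Fin N) ℂ) : Spinor N →L[ℝ] Spinor N :=
  LinearMap.toContinuousLinearMap ((Matrix.toEuclideanLin M).restrictScalars ℝ)

@[simp] lemma mulVecL_apply (M : Matrix (Fin N) (Fin N) ℂ) (v : Spinor N) :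
    mulVecL M v = mulVecE M v := rfl

lemma mulVecE_smulM (c : ℂ) (M : Matrix (Fin N) (Fin N) ℂ) (v : Spinor N) :
    mulVecE (c • M) v = c • mulVecE M v := by
  unfold mulVecE; rw [_root_.map_smul]; rfl

lemma mulVecE_smulv (M : Matrix (Fin N) (Fin N) ℂ) (c : ℂ) (v : Spinor N) :
    mulVecE M (c • v) = c • mulVecE M v := _root_.map_smul _ c v

lemma mulVecE_subM (M M' : Matrix (Fin N) (Fin N) ℂ) (v : Spinor N) :
    mulVecE (M - M') v = mulVecE M v - mulVecE M' v := by
  unfold mulVecE; rw [_root_.map_sub]; rfl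

lemma mulVecE_subv (M : Matrix (Fin N) (Fin N) ℂ) (u v : Spinor N) :
    mulVecE M (u - v) = mulVecE M u - mulVecE M v := _root_.map_sub _ _ _

lemma mulVecE_zeroM (v : Spinor N) : mulVecE (0 : Matrix (Fin N) (Fin N) ℂ) v = 0 := by
  unfold mulVecE; rw [_root_.map_zero]; rfl

lemma mulVecE_zerov (M : Matrix (Fin N) (Fin N) ℂ) : mulVecE M (0 : Spinor N) = 0 :=
  _root_.map_zero _

lemma mulVecE_mulM (M M' : Matrix (Fin N) (Fin N) ℂ) (v : Spinor N) :
    mulVecE (M * M') v = mulVecE M (mulVecE M' v) := by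
  simp [mulVecE, Matrix.toEuclideanLin_apply, Matrix.mulVec_mulVec]

lemma mulVecE_oneM (v : Spinor N) : mulVecE (1 : Matrix (Fin N) (Fin N) ℂ) v = v := by
  simp [mulVecE, Matrix.toEuclideanLin_apply, Matrix.one_mulVec]

lemma mulVecE_sumv {ι : Type*} (s : Finset ι) (M : Matrix (Fin N) (Fin N) ℂ)
    (f : ι → Spinor N) : mulVecE M (∑ i ∈ s, f i) = ∑ i ∈ s, mulVecE M (f i) :=
  _root_.map_sum _ _ _

lemma mulVecE_sumM {ι : Type*} (s : Finset ι) (M : ι → Matrix (Fin N) (Fin N) ℂ)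
    (v : Spinor N) : mulVecE (∑ i ∈ s, M i) v = ∑ i ∈ s, mulVecE (M i) v := by
  unfold mulVecE; rw [_root_.map_sum]; simp

variable {d : ℕ} {V W : Type*} [NormedAddCommGroup V] [NormedSpace ℝ V]
  [NormedAddCommGroup W] [NormedSpace ℝ W]

lemma pd_clm (A : V →L[ℝ] W) {f : ESp d → V} (hf : Differentiable ℝ f) (k : Fin d)
    (x : ESp d) : pd k (fun y => A (f y)) x = A (pd k f x) := by
  unfold pd
  have : (fun y => A (f y)) = ⇑A ∘ f := rfl
  rw [this, (A.hasFDerivAt.comp x (hf x).hasFDerivAt).fderiv]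
  rfl

lemma pd_sum {ι : Type*} (s : Finset ι) (f : ι → ESp d → V)
    (hf : ∀ i ∈ s, Differentiable ℝ (f i)) (k : Fin d) (x : ESp d) :
    pd k (fun y => ∑ i ∈ s, f i y) x = ∑ i ∈ s, pd k (f i) x := by
  unfold pd
  rw [fderiv_fun_sum fun i hi => (hf i hi x)]
  simp

/-- Two continuous `ℝ`-linear maps out of `ESp d` agreeing on the standard basis agree. -/
lemma clm_ext {F : Type*} [NormedAddCommGroup F] [NormedSpace ℝ F]
    {f g : ESp d →L[ℝ] F}
    (h : ∀ j : Fin d, f (EuclideanSpace.single j 1) = g (EuclideanSpace.single j 1)) :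
    f = g := by
  apply ContinuousLinearMap.coe_injective
  apply Module.Basis.ext (EuclideanSpace.basisFun (Fin d) ℝ).toBasis
  intro j
  simpa [EuclideanSpace.basisFun_apply] using h j

end TwAux

open TwAux in
/-- Any `C²` twistor spinor on `ℝ^d` is of the form
`Φ(x) = φ₀ + (γ·x)φ₁` for constant spinors `φ₀, φ₁`. -/
theorem twistor_spinor_classification
    (d : ℕ) (hd : 3 ≤ d) (N : ℕ) (hN : N = 2 ^ (d / 2))
    (γ : Fin d → Matrix (Fin N) (Fin N) ℂ)
    (hherm : ∀ j, (γ j).IsHermitian)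
    (hanti : ∀ j k, γ j * γ k + γ k * γ j = if j = k then (2 : ℂ) • 1 else 0)
    (Φ : ESp d → Spinor N) (hΦ : ContDiff ℝ 2 Φ)
    (htw : ∀ (j : Fin d) (x : ESp d),
      (-Complex.I) • pd j Φ x - (((d : ℂ))⁻¹) • mulVecE (γ j) (dirac γ Φ x) = 0) :
    ∃ φ₀ φ₁ : Spinor N, ∀ x : ESp d, Φ x = φ₀ + mulVecE (gdotR γ x) φ₁ := by
  -- scalar facts
  have hd0 : (d : ℂ) ≠ 0 := Nat.cast_ne_zero.mpr (by omega)
  have hd2 : (d : ℂ) - 2 ≠ 0 := by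
    rw [sub_ne_zero]
    exact_mod_cast (by omega : (d : ℕ) ≠ 2)
  have hd1 : (2 : ℂ) * d - 2 ≠ 0 := by
    have : (d : ℂ) ≠ 1 := by exact_mod_cast (by omega : (d : ℕ) ≠ 1)
    intro h
    apply this
    have h2 : (2 : ℂ) * d = 2 * 1 := by rw [mul_one]; linear_combination h
    exact mul_left_cancel₀ (two_ne_zero) h2
  -- gamma squared is one
  have hγ2 : ∀ k, γ k * γ k = 1 := by
    intro k
    have h := hanti k k
    simp only [if_pos rfl] at h
    have h2 : (2 : ℂ) • (γ k * γ k) = (2 : ℂ) • (1 : Matrix (Fin N) (Fin N) ℂ) := by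
      rw [two_smul]; exact h
    exact smul_right_injective _ (two_ne_zero (α := ℂ)) h2
  -- differentiability of Φ and of its partial derivatives
  have hΦd : Differentiable ℝ Φ := hΦ.differentiable two_ne_zero
  have hfd' : Differentiable ℝ (fderiv ℝ Φ) :=
    (hΦ.fderiv_right (m := 1) (by norm_num)).differentiable one_ne_zero
  have hpdΦ : ∀ j, Differentiable ℝ (pd j Φ) := by
    intro j
    exact (ContinuousLinearMap.apply ℝ (Spinor N)
      (EuclideanSpace.single j (1:ℝ))).differentiable.comp hfd'
  -- ψ := dirac γ Φ
  set ψ : ESp d → Spinor N := dirac γ Φ with hψdef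
  have hψeq : ψ = fun x => ∑ j, mulVecL ((-Complex.I) • γ j) (pd j Φ x) := by
    funext x
    simp only [hψdef, dirac, mulVecL_apply, mulVecE_smulM, mulVecE_smulv]
  have hψd : Differentiable ℝ ψ := by
    rw [hψeq]
    exact Differentiable.fun_sum fun j _ => (mulVecL _).differentiable.comp (hpdΦ j)
  -- twistor equation rewritten
  have htwj : ∀ j, pd j Φ =
      fun x => mulVecL ((Complex.I * (d : ℂ)⁻¹) • γ j) (ψ x) := by
    intro j
    funext x
    have h := sub_eq_zero.mp (htw j x)
    have h2 := congrArg (fun v => Complex.I • v) h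
    rw [smul_smul, smul_smul, mul_neg, Complex.I_mul_I, neg_neg, one_smul] at h2
    rw [h2, mulVecL_apply, mulVecE_smulM]
  -- Schwarz symmetry
  have hpdeval : ∀ (a b : Fin d) (x : ESp d), pd b (pd a Φ) x =
      fderiv ℝ (fderiv ℝ Φ) x (EuclideanSpace.single b 1) (EuclideanSpace.single a 1) := by
    intro a b x
    have h1 : pd a Φ = fun y =>
        (ContinuousLinearMap.apply ℝ (Spinor N) (EuclideanSpace.single a (1:ℝ)))
          (fderiv ℝ Φ y) := rfl
    rw [h1, pd_clm _ hfd']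
    rfl
  have hpdpd : ∀ (a b : Fin d) (x : ESp d), pd b (pd a Φ) x = pd a (pd b Φ) x := by
    intro a b x
    rw [hpdeval, hpdeval]
    exact second_derivative_symmetric (fun y => (hΦd y).hasFDerivAt)
      ((hfd' x).hasFDerivAt) _ _
  -- all partial derivatives of ψ vanish
  have hψpd0 : ∀ (k : Fin d) (x : ESp d), pd k ψ x = 0 := by
    intro k₀ x
    set u : Fin d → Spinor N := fun j => pd j ψ x with hu
    set S : Spinor N := ∑ j, mulVecE (γ j) (u j) with hS
    have hA : ∀ k : Fin d, (d : ℂ) • u k = (2 : ℂ) • u k - mulVecE (γ k) S := by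
      intro k
      have h1 : u k = ∑ j, mulVecE ((-Complex.I) • γ j) (pd k (pd j Φ) x) := by
        rw [hu]
        simp only
        rw [hψeq, pd_sum Finset.univ
          (fun (j : Fin d) (y : ESp d) => mulVecL ((-Complex.I) • γ j) (pd j Φ y))
          (fun j _ => (mulVecL _).differentiable.comp (hpdΦ j))]
        exact Finset.sum_congr rfl fun j _ => by
          rw [pd_clm _ (hpdΦ j)]; rfl
      have hsc : (-Complex.I) * (Complex.I * (d:ℂ)⁻¹) = (d:ℂ)⁻¹ := by
        rw [neg_mul, ← mul_assoc, Complex.I_mul_I]; ring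
      have h2 : u k = (d:ℂ)⁻¹ • ∑ j, mulVecE (γ j * γ k) (u j) := by
        rw [h1, Finset.smul_sum]
        refine Finset.sum_congr rfl fun j _ => ?_
        rw [hpdpd j k x, htwj k, pd_clm _ hψd, mulVecL_apply]
        rw [mulVecE_smulM, mulVecE_smulM, mulVecE_smulv, smul_smul, hsc,
          ← mulVecE_mulM]
      have h3 : (d:ℂ) • u k = ∑ j, mulVecE (γ j * γ k) (u j) := by
        rw [h2, smul_smul, mul_inv_cancel₀ hd0, one_smul]
      have h4 : ∑ j, mulVecE (γ j * γ k) (u j) = (2:ℂ) • u k - mulVecE (γ k) S := by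
        have hgs : ∀ j, γ j * γ k =
            (if j = k then ((2:ℂ) • 1 : Matrix (Fin N) (Fin N) ℂ) else 0) - γ k * γ j :=
          fun j => eq_sub_of_add_eq (hanti j k)
        calc ∑ j, mulVecE (γ j * γ k) (u j)
            = ∑ j, (mulVecE (if j = k then ((2:ℂ) • 1 : Matrix (Fin N) (Fin N) ℂ) else 0)
                (u j) - mulVecE (γ k * γ j) (u j)) := by
              refine Finset.sum_congr rfl fun j _ => ?_
              rw [hgs j, mulVecE_subM]
          _ = (∑ j, mulVecE (if j = k then ((2:ℂ) • 1 : Matrix (Fin N) (Fin N) ℂ) else 0)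
                (u j)) - ∑ j, mulVecE (γ k * γ j) (u j) := Finset.sum_sub_distrib _ _
          _ = (2:ℂ) • u k - mulVecE (γ k) S := by
              congr 1
              · rw [Finset.sum_congr rfl (fun j _ => show
                    mulVecE (if j = k then ((2:ℂ) • 1 : Matrix (Fin N) (Fin N) ℂ) else 0)
                      (u j) = if j = k then (2:ℂ) • u j else 0 by
                  split_ifs with h
                  · rw [mulVecE_smulM, mulVecE_oneM]
                  · exact mulVecE_zeroM _)]
                rw [Finset.sum_ite_eq' Finset.univ k (fun j => (2:ℂ) • u j)]
                simp
              · rw [hS, mulVecE_sumv]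
                exact Finset.sum_congr rfl fun j _ => (mulVecE_mulM _ _ _)
      rw [h3, h4]
    have hB : ∀ k : Fin d, (d:ℂ) • mulVecE (γ k) (u k)
        = (2:ℂ) • mulVecE (γ k) (u k) - S := by
      intro k
      have h := congrArg (mulVecE (γ k)) (hA k)
      rw [mulVecE_smulv, mulVecE_subv, mulVecE_smulv, ← mulVecE_mulM, hγ2 k,
        mulVecE_oneM] at h
      exact h
    have hsum : (d:ℂ) • S = (2:ℂ) • S - (d : ℕ) • S := by
      calc (d:ℂ) • S = ∑ k, (d:ℂ) • mulVecE (γ k) (u k) := by rw [hS, Finset.smul_sum]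
        _ = ∑ k, ((2:ℂ) • mulVecE (γ k) (u k) - S) := Finset.sum_congr rfl fun k _ => hB k
        _ = (2:ℂ) • S - (d : ℕ) • S := by
            rw [Finset.sum_sub_distrib, ← Finset.smul_sum, ← hS, Finset.sum_const,
              Finset.card_univ, Fintype.card_fin]
    rw [← Nat.cast_smul_eq_nsmul ℂ] at hsum
    have hadd : (d:ℂ) • S + (d:ℂ) • S = (2:ℂ) • S := by nth_rewrite 1 [hsum]; abel
    have h2dS : ((2:ℂ) * d - 2) • S = 0 := by
      calc ((2:ℂ) * d - 2) • S = (2:ℂ) • ((d:ℂ) • S) - (2:ℂ) • S := by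
            rw [sub_smul, mul_smul]
        _ = ((d:ℂ) • S + (d:ℂ) • S) - (2:ℂ) • S := by rw [two_smul]
        _ = 0 := by rw [hadd, sub_self]
    have hS0 : S = 0 := by
      rcases smul_eq_zero.mp h2dS with h | h
      · exact absurd h hd1
      · exact h
    have hu0 : ((d:ℂ) - 2) • u k₀ = 0 := by
      rw [sub_smul, hA k₀, hS0, mulVecE_zerov, sub_zero, sub_self]
    rcases smul_eq_zero.mp hu0 with h | h
    · exact absurd h hd2
    · exact h
  -- ψ is constant
  have hfψ0 : ∀ x, fderiv ℝ ψ x = 0 := by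
    intro x
    apply clm_ext
    intro j
    simpa [pd] using hψpd0 j x
  have hψc : ∀ x, ψ x = ψ 0 := fun x => is_const_of_fderiv_eq_zero hψd hfψ0 x 0
  -- conclude
  refine ⟨Φ 0, (Complex.I * (d:ℂ)⁻¹) • ψ 0, ?_⟩
  set φ₁ : Spinor N := (Complex.I * (d:ℂ)⁻¹) • ψ 0 with hφ₁
  set L : ESp d →L[ℝ] Spinor N :=
    ∑ j, (PiLp.proj 2 (fun _ : Fin d => ℝ) j).smulRight (mulVecE (γ j) φ₁) with hL
  have hLx : ∀ x : ESp d, mulVecE (gdotR γ x) φ₁ = L x := by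
    intro x
    rw [gdotR, mulVecE_sumM, hL, ContinuousLinearMap.sum_apply]
    refine Finset.sum_congr rfl fun j _ => ?_
    rw [mulVecE_smulM, Complex.coe_smul]
    rfl
  have hgd : Differentiable ℝ (fun x : ESp d => Φ 0 + L x) :=
    (differentiable_const _).add L.differentiable
  have hgf : ∀ x, fderiv ℝ (fun x : ESp d => Φ 0 + L x) x = L := by
    intro x
    rw [fderiv_const_add, L.fderiv]
  have hLj : ∀ j : Fin d, L (EuclideanSpace.single j 1) = mulVecE (γ j) φ₁ := by
    intro j
    rw [hL, ContinuousLinearMap.sum_apply]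
    rw [Finset.sum_eq_single j
      (fun i _ hij => by
        simp [ContinuousLinearMap.smulRight_apply, EuclideanSpace.single_apply,
          hij])
      (fun h => absurd (Finset.mem_univ j) h)]
    simp [ContinuousLinearMap.smulRight_apply, EuclideanSpace.single_apply]
  have hfΦ : ∀ x, fderiv ℝ Φ x = L := by
    intro x
    apply clm_ext
    intro j
    have h1 : fderiv ℝ Φ x (EuclideanSpace.single j 1) = pd j Φ x := rfl
    rw [h1, htwj j]
    simp only
    rw [hψc x, hLj j, mulVecL_apply, mulVecE_smulM, hφ₁, mulVecE_smulv]
  have hΦeq : Φ = fun x : ESp d => Φ 0 + L x := by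
    refine eq_of_fderiv_eq hΦd hgd (fun x => by rw [hfΦ x, hgf x]) 0 ?_
    simp
  intro x
  rw [hLx x]
  exact congrFun hΦeq x
end
end

section
/- Let d ≥ 3 be odd and N = 2^{(d-1)/2}. With Σ, 𝒜, Ψ₀, s and Ψ as in the context, the pair (Ψ, 𝒜) solves the zero-mode equation pointwise: γ·(-i∇)Ψ(x) = (γ·𝒜(x)) Ψ(x) for all x ∈ ℝ^d. -/
open MeasureTheory Complex Filter ENNReal

noncomputable section

/-- The skew-symmetric `d×d` matrix `Σ`: block diagonal with a `1×1` zero block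
followed by `(d-1)/2` blocks `((0,-1),(1,0))` (0-based indices: `Σ_{j,j+1} = -1`,
`Σ_{j+1,j} = 1` for odd `j`). -/
def SigmaMat (d : ℕ) : Matrix (Fin d) (Fin d) ℝ :=
  Matrix.of fun j k =>
    if Odd (j : ℕ) ∧ (k : ℕ) = (j : ℕ) + 1 then -1
    else if Odd (k : ℕ) ∧ (j : ℕ) = (k : ℕ) + 1 then 1
    else 0

/-- The vector field `𝒜(x) = d(1+|x|²)^{-2}((1-|x|²)e₁ + 2x₁x + 2Σx)`. -/
def curlyA (d : ℕ) (x : ESp d) : ESp d :=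
  (WithLp.equiv 2 (∀ _ : Fin d, ℝ)).symm fun k =>
    (d : ℝ) * ((1 + ‖x‖ ^ 2) ^ 2)⁻¹ *
      ((if (k : ℕ) = 0 then 1 - ‖x‖ ^ 2 else 0)
        + 2 * x ⟨0, lt_of_le_of_lt (Nat.zero_le (k : ℕ)) k.isLt⟩ * x k
        + 2 * ((SigmaMat d).mulVec (fun j => x j)) k)

section Helpers

lemma LY_sum_range_odd_split {M : Type*} [AddCommMonoid M] (m : ℕ) (F : ℕ → M) :
    ∑ j ∈ Finset.range (2 * m + 1), F j
      = F 0 + ∑ α ∈ Finset.range m, (F (2 * α + 1) + F (2 * α + 2)) := by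
  induction m with
  | zero => simp
  | succ n ih =>
      have h : 2 * (n + 1) + 1 = (2 * n + 1) + 1 + 1 := by ring
      rw [h, Finset.sum_range_succ, Finset.sum_range_succ, ih, Finset.sum_range_succ]
      abel

variable {d N : ℕ} {γ : Fin d → Matrix (Fin N) (Fin N) ℂ}

lemma mulVecE_add (A B : Matrix (Fin N) (Fin N) ℂ) (v : Spinor N) :
    mulVecE (A + B) v = mulVecE A v + mulVecE B v := by
  simp [mulVecE]

lemma mulVecE_smulM (c : ℂ) (A : Matrix (Fin N) (Fin N) ℂ) (v : Spinor N) :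
    mulVecE (c • A) v = c • mulVecE A v := by
  simp [mulVecE]

lemma mulVecE_mulM (A B : Matrix (Fin N) (Fin N) ℂ) (v : Spinor N) :
    mulVecE (A * B) v = mulVecE A (mulVecE B v) := by
  simp [mulVecE, Matrix.toEuclideanLin_apply, Matrix.mulVec_mulVec]

lemma mulVecE_one (v : Spinor N) : mulVecE 1 v = v := by
  simp [mulVecE, Matrix.toEuclideanLin_apply]

lemma mulVecE_addv (A : Matrix (Fin N) (Fin N) ℂ) (u v : Spinor N) :
    mulVecE A (u + v) = mulVecE A u + mulVecE A v := by
  simp [mulVecE]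

lemma mulVecE_subv (A : Matrix (Fin N) (Fin N) ℂ) (u v : Spinor N) :
    mulVecE A (u - v) = mulVecE A u - mulVecE A v := by
  simp [mulVecE]

lemma mulVecE_subM (A B : Matrix (Fin N) (Fin N) ℂ) (v : Spinor N) :
    mulVecE (A - B) v = mulVecE A v - mulVecE B v := by
  simp [mulVecE]

lemma mulVecE_negM (A : Matrix (Fin N) (Fin N) ℂ) (v : Spinor N) :
    mulVecE (-A) v = - mulVecE A v := by
  simp [mulVecE]

lemma mulVecE_smulv (A : Matrix (Fin N) (Fin N) ℂ) (c : ℂ) (v : Spinor N) :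
    mulVecE A (c • v) = c • mulVecE A v := by
  simp [mulVecE]

lemma mulVecE_sumM {n : ℕ} (M : Fin n → Matrix (Fin N) (Fin N) ℂ) (v : Spinor N) :
    mulVecE (∑ j, M j) v = ∑ j, mulVecE (M j) v := by
  simp [mulVecE, map_sum]

lemma mulVecE_real_smulv (A : Matrix (Fin N) (Fin N) ℂ) (r : ℝ) (v : Spinor N) :
    mulVecE A (r • v) = r • mulVecE A v := by
  rw [← Complex.coe_smul, ← Complex.coe_smul, mulVecE_smulv]

lemma gdotR_mulVecE (v : ESp d) (w : Spinor N) :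
    mulVecE (gdotR γ v) w = ∑ j, (v j : ℂ) • mulVecE (γ j) w := by
  unfold gdotR
  rw [mulVecE_sumM]
  exact Finset.sum_congr rfl fun j _ => mulVecE_smulM _ _ _

lemma gdotR_anticomm
    (hanti : ∀ j k, γ j * γ k + γ k * γ j = if j = k then (2 : ℂ) • 1 else 0)
    (a b : ESp d) :
    gdotR γ a * gdotR γ b + gdotR γ b * gdotR γ a
      = (∑ j, ((a j : ℂ) * b j)) • ((2:ℂ) • 1) := by
  unfold gdotR
  rw [Finset.sum_mul_sum, Finset.sum_mul_sum]
  rw [Finset.sum_comm (s := Finset.univ) (t := Finset.univ)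
    (f := fun j k => ((b j : ℂ) • γ j) * ((a k : ℂ) • γ k))]
  rw [← Finset.sum_add_distrib]
  have key : ∀ j : Fin d, (∑ k, ((a j : ℂ) • γ j) * ((b k : ℂ) • γ k))
      + (∑ k, ((b k : ℂ) • γ k) * ((a j : ℂ) • γ j))
      = ((a j : ℂ) * b j) • ((2:ℂ) • 1) := by
    intro j
    rw [← Finset.sum_add_distrib]
    rw [Finset.sum_eq_single j]
    · rw [smul_mul_smul_comm, smul_mul_smul_comm, mul_comm (b j : ℂ), ← smul_add, hanti,
        if_pos rfl]
    · intro k _ hk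
      rw [smul_mul_smul_comm, smul_mul_smul_comm, mul_comm (b k : ℂ), ← smul_add, hanti,
        if_neg (fun h => hk h.symm)]
      simp
    · simp
  simp_rw [key]
  rw [Finset.sum_smul]

lemma gdotR_single (j0 : Fin d) : gdotR γ (EuclideanSpace.single j0 1) = γ j0 := by
  unfold gdotR
  rw [Finset.sum_eq_single j0]
  · simp [EuclideanSpace.single_apply]
  · intro k _ hk
    simp [EuclideanSpace.single_apply, hk]
  · simp

lemma SigmaMat_skew (d : ℕ) (j k : Fin d) : SigmaMat d j k = - SigmaMat d k j := by
  simp only [SigmaMat, Matrix.of_apply, Nat.odd_iff]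
  split_ifs <;> first | omega | norm_num

lemma sigma_mulVec_odd {d : ℕ} (x : Fin d → ℝ) {j : ℕ} (hj : Odd j) (h : j + 1 < d) :
    (SigmaMat d).mulVec x ⟨j, by omega⟩ = - x ⟨j + 1, h⟩ := by
  simp only [Matrix.mulVec, dotProduct]
  rw [Finset.sum_eq_single (⟨j + 1, h⟩ : Fin d)]
  · simp only [SigmaMat, Matrix.of_apply, Nat.odd_iff]
    rw [Nat.odd_iff] at hj
    split_ifs <;> (try simp only [true_and, and_true, false_and, and_false] at *) <;>
      first | ring1 | omega | (exfalso; omega) | contradiction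
  · intro k _ hk
    have hk' : (k : ℕ) ≠ j + 1 := fun hc => hk (Fin.ext hc)
    simp only [SigmaMat, Matrix.of_apply, Nat.odd_iff]
    rw [Nat.odd_iff] at hj
    split_ifs <;> (try simp only [true_and, and_true, false_and, and_false] at *) <;>
      first | ring1 | omega | (exfalso; omega) | contradiction
  · simp

lemma sigma_mulVec_even {d : ℕ} (x : Fin d → ℝ) {j : ℕ} (hj : Odd j) (h : j + 1 < d) :
    (SigmaMat d).mulVec x ⟨j + 1, h⟩ = x ⟨j, by omega⟩ := by
  simp only [Matrix.mulVec, dotProduct]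
  rw [Finset.sum_eq_single (⟨j, by omega⟩ : Fin d)]
  · simp only [SigmaMat, Matrix.of_apply, Nat.odd_iff]
    rw [Nat.odd_iff] at hj
    split_ifs <;> (try simp only [true_and, and_true, false_and, and_false] at *) <;>
      first | ring1 | omega | (exfalso; omega) | contradiction
  · intro k _ hk
    have hk' : (k : ℕ) ≠ j := fun hc => hk (Fin.ext hc)
    simp only [SigmaMat, Matrix.of_apply, Nat.odd_iff]
    rw [Nat.odd_iff] at hj
    split_ifs <;> (try simp only [true_and, and_true, false_and, and_false] at *) <;>
      first | ring1 | omega | (exfalso; omega) | contradiction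
  · simp

lemma sigma_mulVec_zero {d : ℕ} (x : Fin d → ℝ) (h : 0 < d) :
    (SigmaMat d).mulVec x ⟨0, h⟩ = 0 := by
  simp only [Matrix.mulVec, dotProduct]
  apply Finset.sum_eq_zero
  intro k _
  simp only [SigmaMat, Matrix.of_apply, Nat.odd_iff]
  split_ifs <;> (try simp only [true_and, and_true, false_and, and_false] at *) <;>
    first | ring1 | omega | (exfalso; omega) | contradiction

lemma sigma_dot_zero (d : ℕ) (x : Fin d → ℝ) :
    ∑ j, (SigmaMat d).mulVec x j * x j = 0 := by
  have h : ∑ j, (SigmaMat d).mulVec x j * x j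
      = - ∑ j, (SigmaMat d).mulVec x j * x j := by
    calc ∑ j, (SigmaMat d).mulVec x j * x j
        = ∑ j, ∑ k, SigmaMat d j k * x k * x j := by
          simp [Matrix.mulVec, dotProduct, Finset.sum_mul]
      _ = ∑ j, ∑ k, -(SigmaMat d k j * x j * x k) := by
          refine Finset.sum_congr rfl fun j _ => Finset.sum_congr rfl fun k _ => ?_
          rw [SigmaMat_skew]; ring
      _ = - ∑ k, ∑ j, SigmaMat d k j * x j * x k := by
          rw [← Finset.sum_neg_distrib]
          rw [Finset.sum_comm]
          simp [Finset.sum_neg_distrib]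
      _ = - ∑ k, (SigmaMat d).mulVec x k * x k := by
          simp [Matrix.mulVec, dotProduct, Finset.sum_mul]
  linarith

end Helpers

set_option maxHeartbeats 1600000 in
/-- In odd dimensions, the pair `(Ψ, 𝒜)` of Loss–Yau type solves the
zero-mode equation pointwise: `γ·(-i∇)Ψ(x) = (γ·𝒜(x))Ψ(x)`. -/
theorem loss_yau_zero_mode
    (d : ℕ) (hd : 3 ≤ d) (hodd : Odd d) (N : ℕ) (hN : N = 2 ^ ((d - 1) / 2))
    (γ : Fin d → Matrix (Fin N) (Fin N) ℂ)
    (hherm : ∀ j, (γ j).IsHermitian)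
    (hanti : ∀ j k, γ j * γ k + γ k * γ j = if j = k then (2 : ℂ) • 1 else 0)
    (Ψ₀ : Spinor N) (hΨ₀n : ‖Ψ₀‖ = 1)
    (hvac : ∀ (α : ℕ) (h1 : 1 ≤ α) (h2 : 2 * α + 1 ≤ d),
      mulVecE (γ ⟨2 * α - 1, by omega⟩ + Complex.I • γ ⟨2 * α, by omega⟩) Ψ₀ = 0)
    (s : ℝ) (hs : s = 1 ∨ s = -1)
    (hsΨ₀ : mulVecE (γ ⟨0, by omega⟩) Ψ₀ = (s : ℂ) • Ψ₀)
    (Ψ : ESp d → Spinor N)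
    (hΨ : Ψ = fun y => (((1 + ‖y‖ ^ 2) ^ (-(d : ℝ) / 2) : ℝ))
      • (Ψ₀ + (Complex.I * (s : ℂ)) • mulVecE (gdotR γ y) Ψ₀)) :
    ∀ x : ESp d, dirac γ Ψ x = mulVecE (gdotR γ (curlyA d x)) (Ψ x) := by
  intro x
  obtain ⟨m, hm⟩ : ∃ m, d = 2 * m + 1 := by
    obtain ⟨m, hm⟩ := hodd; exact ⟨m, by omega⟩
  have hd0 : 0 < d := by omega
  set z : Fin d := ⟨0, hd0⟩ with hz
  set r2 : ℝ := ‖x‖ ^ 2 with hr2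
  have hr2nn : 0 ≤ r2 := by rw [hr2]; positivity
  have hpos : (0:ℝ) < 1 + r2 := by linarith
  set fR : ℝ := (1 + r2) ^ (-(d:ℝ)/2) with hfR
  set gR : ℝ := (1 + r2) ^ (-(d:ℝ)/2 - 1) with hgR
  set hR : ℝ := ((1 + r2) ^ 2)⁻¹ with hhR
  have hfg : fR = (1 + r2) * gR := by
    have h := Real.rpow_add hpos 1 (-(d:ℝ)/2 - 1)
    rw [show (1:ℝ) + (-(d:ℝ)/2 - 1) = -(d:ℝ)/2 by ring, Real.rpow_one] at h
    rw [hfR, hgR, h]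
  have hH : hR * (1 + r2) ^ 2 = 1 := by
    rw [hhR]; exact inv_mul_cancel₀ (by positivity)
  -- complex scalar relations
  have hss : (s:ℂ) * (s:ℂ) = 1 := by
    rcases hs with h | h <;> rw [h] <;> norm_num
  have hfgc : (fR:ℂ) = (1 + (r2:ℂ)) * (gR:ℂ) := by
    rw [hfg]; push_cast; ring
  have hHc : (hR:ℂ) * (1 + (r2:ℂ)) ^ 2 = 1 := by
    have := hH
    have h2 : ((hR * (1 + r2) ^ 2 : ℝ) : ℂ) = ((1:ℝ):ℂ) := by rw [this]
    push_cast at h2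
    convert h2 using 2 <;> push_cast <;> ring
  have hr2sum : ∑ j, (x j:ℂ) * (x j:ℂ) = (r2:ℂ) := by
    have hx : r2 = ∑ j, x j * x j := by
      rw [hr2, EuclideanSpace.norm_eq, Real.sq_sqrt (by positivity)]
      exact Finset.sum_congr rfl fun j _ => by rw [Real.norm_eq_abs, _root_.sq_abs, sq]
    rw [hx]; push_cast; ring
  -- basic gamma facts
  have hγsq : ∀ j, γ j * γ j = 1 := by
    intro j
    have h := hanti j j
    rw [if_pos rfl, ← two_smul ℂ (γ j * γ j)] at h
    exact smul_right_injective _ two_ne_zero h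
  have hBB : gdotR γ x * gdotR γ x = (r2:ℂ) • (1 : Matrix (Fin N) (Fin N) ℂ) := by
    have h := gdotR_anticomm hanti x x
    rw [hr2sum, ← two_smul ℂ (gdotR γ x * gdotR γ x),
      smul_comm (r2:ℂ) (2:ℂ) (1 : Matrix (Fin N) (Fin N) ℂ)] at h
    exact smul_right_injective _ two_ne_zero h
  have hsP : mulVecE (γ z) Ψ₀ = (s:ℂ) • Ψ₀ := hsΨ₀
  set Q : Spinor N := mulVecE (gdotR γ x) Ψ₀ with hQ
  have hQsum : Q = ∑ j, (x j:ℂ) • mulVecE (γ j) Ψ₀ := by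
    rw [hQ, gdotR_mulVecE]
  have hBQ : mulVecE (gdotR γ x) Q = (r2:ℂ) • Ψ₀ := by
    rw [hQ, ← mulVecE_mulM, hBB, mulVecE_smulM, mulVecE_one]
  -- gamma_0 anticommutation
  have h0B : γ z * gdotR γ x + gdotR γ x * γ z = ((x z:ℂ) * 2) • 1 := by
    have h := gdotR_anticomm hanti (EuclideanSpace.single z 1) x
    rw [gdotR_single] at h
    have hsum : ∑ j, ((EuclideanSpace.single z (1:ℝ)) j : ℂ) * (x j : ℂ) = (x z : ℂ) := by
      rw [Finset.sum_eq_single z]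
      · simp [EuclideanSpace.single_apply]
      · intro k _ hk; simp [EuclideanSpace.single_apply, hk]
      · simp
    rw [hsum] at h
    rw [h, smul_smul]
  have hγ0Q : mulVecE (γ z) Q = ((x z:ℂ) * 2) • Ψ₀ - (s:ℂ) • Q := by
    have h1 : γ z * gdotR γ x = ((x z:ℂ) * 2) • 1 - gdotR γ x * γ z :=
      eq_sub_of_add_eq h0B
    calc mulVecE (γ z) Q = mulVecE (γ z * gdotR γ x) Ψ₀ := by
          rw [mulVecE_mulM, hQ]
      _ = ((x z:ℂ) * 2) • Ψ₀ - (s:ℂ) • Q := by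
          rw [h1, mulVecE_subM, mulVecE_smulM, mulVecE_one, mulVecE_mulM, hsP,
            mulVecE_smulv, hQ]
  -- Sigma
  set Sv : Fin d → ℝ := (SigmaMat d).mulVec (fun j => x j) with hSv
  set SxE : ESp d := (WithLp.equiv 2 (∀ _ : Fin d, ℝ)).symm Sv with hSxE
  have hSxEapp : ∀ j, SxE j = Sv j := fun j => rfl
  set Smat : Matrix (Fin N) (Fin N) ℂ := gdotR γ SxE with hSmat
  have hSdot : ∑ j, ((SxE j : ℝ):ℂ) * (x j:ℂ) = 0 := by
    have h0 : ∑ j, Sv j * x j = 0 := sigma_dot_zero d (fun j => x j)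
    have h1 : ((∑ j, Sv j * x j : ℝ):ℂ) = 0 := by rw [h0]; simp
    push_cast at h1
    simpa [hSxEapp] using h1
  have hSBmat : Smat * gdotR γ x + gdotR γ x * Smat = 0 := by
    rw [hSmat, gdotR_anticomm hanti SxE x, hSdot, zero_smul]
  -- vacuum pairing identity
  have hSP : mulVecE Smat Ψ₀
      = Complex.I • Q - (Complex.I * (x z:ℂ) * (s:ℂ)) • Ψ₀ := by
    set G : ℕ → Spinor N := fun n =>
      if h : n < d then ((Sv ⟨n, h⟩ : ℂ) - Complex.I * (x ⟨n, h⟩ : ℂ)) • mulVecE (γ ⟨n, h⟩) Ψ₀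
      else 0 with hG
    have hGj : ∀ j : Fin d, G (j:ℕ)
        = ((Sv j : ℂ) - Complex.I * (x j : ℂ)) • mulVecE (γ j) Ψ₀ := by
      intro j
      rw [hG]
      exact dif_pos j.isLt
    have hsum1 : ∑ j : Fin d, G (j:ℕ) = mulVecE Smat Ψ₀ - Complex.I • Q := by
      rw [hSmat, gdotR_mulVecE, hQsum, Finset.smul_sum, ← Finset.sum_sub_distrib]
      refine Finset.sum_congr rfl fun j _ => ?_
      rw [hGj j, hSxEapp j, sub_smul, smul_smul]
    have hG0 : G 0 = -((Complex.I * (x z:ℂ) * (s:ℂ)) • Ψ₀) := by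
      have e0 : G 0 = ((Sv z:ℂ) - Complex.I * (x z:ℂ)) • mulVecE (γ z) Ψ₀ := dif_pos hd0
      have hz0 : Sv z = 0 := sigma_mulVec_zero _ hd0
      rw [e0, hz0, hsP, smul_smul]
      push_cast
      module
    have hpair : ∀ α ∈ Finset.range m, G (2*α+1) + G (2*α+2) = 0 := by
      intro α hα
      have hα' : α < m := Finset.mem_range.mp hα
      have h1 : 2*α+1 < d := by omega
      have h2 : 2*α+2 < d := by omega
      have hv := hvac (α+1) (by omega) (by omega)
      simp only [show 2*(α+1)-1 = 2*α+1 from by omega,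
        show 2*(α+1) = 2*α+2 from by omega] at hv
      rw [mulVecE_add, mulVecE_smulM] at hv
      have hva : mulVecE (γ ⟨2*α+1, h1⟩) Ψ₀
          = -(Complex.I • mulVecE (γ ⟨2*α+2, h2⟩) Ψ₀) :=
        eq_neg_of_add_eq_zero_left hv
      have hSva : Sv ⟨2*α+1, h1⟩ = - x ⟨2*α+2, h2⟩ :=
        sigma_mulVec_odd (fun j => x j) (by exact ⟨α, by ring⟩) h2
      have hSvb : Sv ⟨2*α+2, h2⟩ = x ⟨2*α+1, h1⟩ :=
        sigma_mulVec_even (fun j => x j) (by exact ⟨α, by ring⟩) h2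
      have e1 : G (2*α+1) = ((Sv ⟨2*α+1, h1⟩:ℂ) - Complex.I * (x ⟨2*α+1, h1⟩:ℂ))
          • mulVecE (γ ⟨2*α+1, h1⟩) Ψ₀ := dif_pos h1
      have e2 : G (2*α+2) = ((Sv ⟨2*α+2, h2⟩:ℂ) - Complex.I * (x ⟨2*α+2, h2⟩:ℂ))
          • mulVecE (γ ⟨2*α+2, h2⟩) Ψ₀ := dif_pos h2
      rw [e1, e2, hSva, hSvb, hva, smul_neg, smul_smul, ← neg_smul, ← add_smul]
      convert zero_smul ℂ (mulVecE (γ ⟨2*α+2, h2⟩) Ψ₀) using 2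
      push_cast
      linear_combination ((x ⟨2*α+1, h1⟩ : ℝ):ℂ) * Complex.I_sq
    have hsplit : ∑ j : Fin d, G (j:ℕ)
        = G 0 + ∑ α ∈ Finset.range m, (G (2*α+1) + G (2*α+2)) := by
      rw [Fin.sum_univ_eq_sum_range G d]
      rw [show d = 2*m+1 from hm]
      exact LY_sum_range_odd_split m G
    rw [hsum1, hG0, Finset.sum_eq_zero hpair, add_zero] at hsplit
    have h9 := sub_eq_iff_eq_add.mp hsplit
    rw [h9]
    module
  have hSQ : mulVecE Smat Q
      = -((Complex.I * (r2:ℂ)) • Ψ₀) + (Complex.I * (x z:ℂ) * (s:ℂ)) • Q := by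
    have hmat : Smat * gdotR γ x = -(gdotR γ x * Smat) :=
      eq_neg_of_add_eq_zero_left hSBmat
    calc mulVecE Smat Q = mulVecE (Smat * gdotR γ x) Ψ₀ := by rw [mulVecE_mulM, hQ]
      _ = - mulVecE (gdotR γ x) (mulVecE Smat Ψ₀) := by
          rw [hmat, mulVecE_negM, mulVecE_mulM]
      _ = -((Complex.I * (r2:ℂ)) • Ψ₀) + (Complex.I * (x z:ℂ) * (s:ℂ)) • Q := by
          rw [hSP, mulVecE_subv, mulVecE_smulv, mulVecE_smulv, hBQ, ← hQ]
          module
  -- the vector field decomposition of Ψ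
  set w : Fin d → Spinor N := fun j => (Complex.I * (s:ℂ)) • mulVecE (γ j) Ψ₀ with hw
  set u : Spinor N := Ψ₀ + (Complex.I * (s:ℂ)) • Q with hu
  have hsumw : ∀ y : ESp d, ∑ j, y j • w j
      = (Complex.I * (s:ℂ)) • mulVecE (gdotR γ y) Ψ₀ := by
    intro y
    rw [gdotR_mulVecE, Finset.smul_sum]
    refine Finset.sum_congr rfl fun j _ => ?_
    rw [hw, ← Complex.coe_smul, smul_smul, smul_smul, mul_comm]
  have hΨ' : Ψ = fun y => ((1 + ‖y‖^2) ^ (-(d:ℝ)/2)) • (Ψ₀ + ∑ j, y j • w j) := by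
    rw [hΨ]; funext y; rw [hsumw y]
  have hΨx : Ψ x = fR • u := by
    rw [hΨ']
    show ((1 + ‖x‖^2) ^ (-(d:ℝ)/2)) • (Ψ₀ + ∑ j, x j • w j) = fR • u
    rw [hsumw x]
  -- derivatives
  have hnorm : HasFDerivAt (fun y : ESp d => ‖y‖^2) (2 • (innerSL ℝ x)) x := by
    simpa using (hasFDerivAt_id x).norm_sq
  have hbase : HasFDerivAt (fun y : ESp d => 1 + ‖y‖^2) (2 • (innerSL ℝ x)) x :=
    hnorm.const_add 1
  have hf' : HasFDerivAt (fun y : ESp d => (1 + ‖y‖^2) ^ (-(d:ℝ)/2))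
      ((( -(d:ℝ)/2) * (1 + r2) ^ (-(d:ℝ)/2 - 1)) • (2 • innerSL ℝ x)) x := by
    have h := hbase.rpow_const (p := -(d:ℝ)/2) (Or.inl (by positivity))
    rw [← hr2] at h
    exact h
  set L : ESp d →L[ℝ] Spinor N := ∑ j, (EuclideanSpace.proj j).smulRight (w j) with hL
  have hLapp : ∀ y : ESp d, L y = ∑ j, y j • w j := by
    intro y
    rw [hL, ContinuousLinearMap.sum_apply]
    exact Finset.sum_congr rfl fun j _ => rfl
  have hgconst : HasFDerivAt (fun y : ESp d => Ψ₀ + ∑ j, y j • w j) L x := by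
    have h1 : (fun y : ESp d => Ψ₀ + ∑ j, y j • w j) = fun y => Ψ₀ + L y := by
      funext y; rw [hLapp]
    rw [h1]
    exact L.hasFDerivAt.const_add Ψ₀
  have hΨder : HasFDerivAt Ψ
      (((1 + r2) ^ (-(d:ℝ)/2)) • L
        + ((((-(d:ℝ)/2) * (1 + r2) ^ (-(d:ℝ)/2 - 1)) • (2 • innerSL ℝ x)).smulRight
            (Ψ₀ + ∑ j, x j • w j))) x := by
    rw [hΨ']
    have h := hf'.smul hgconst
    rw [← hr2] at h
    exact h
  have hLe : ∀ j : Fin d, L (EuclideanSpace.single j 1) = w j := by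
    intro j
    rw [hLapp]
    rw [Finset.sum_eq_single j]
    · simp [EuclideanSpace.single_apply]
    · intro k _ hk; simp [EuclideanSpace.single_apply, hk]
    · simp
  have hinner : ∀ j : Fin d, (innerSL ℝ x) (EuclideanSpace.single j 1) = x j := by
    intro j
    simp [EuclideanSpace.inner_single_right, real_inner_comm]
  have hpd : ∀ j : Fin d, pd j Ψ x
      = ((-(d:ℝ)/2) * gR * (2 * x j)) • u + fR • w j := by
    intro j
    rw [pd, hΨder.fderiv]
    rw [ContinuousLinearMap.add_apply, ContinuousLinearMap.smul_apply,
      ContinuousLinearMap.smulRight_apply, ContinuousLinearMap.smul_apply,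
      ContinuousLinearMap.smul_apply, hLe j, hinner j]
    rw [hsumw x, ← hQ]
    rw [← hu, ← hgR, ← hfR]
    rw [add_comm]
    congr 1
    congr 1
    simp only [smul_eq_mul, nsmul_eq_mul]
    push_cast
    ring
  -- dirac computation
  have hterm : ∀ j : Fin d, mulVecE (γ j) ((-Complex.I) • pd j Ψ x)
      = (Complex.I * (d:ℂ) * (gR:ℂ) * (x j:ℂ)) • mulVecE (γ j) u
        + ((s:ℂ) * (fR:ℂ)) • Ψ₀ := by
    intro j
    rw [hpd j, ← Complex.coe_smul, ← Complex.coe_smul, smul_add, smul_smul, smul_smul,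
      mulVecE_addv, mulVecE_smulv, mulVecE_smulv, hw, mulVecE_smulv, ← mulVecE_mulM,
      hγsq j, mulVecE_one, smul_smul]
    congr 1
    · congr 1
      push_cast
      ring
    · congr 1
      linear_combination (-((fR:ℂ) * (s:ℂ))) * Complex.I_sq
  have hdirac : dirac γ Ψ x
      = (Complex.I * (d:ℂ) * (gR:ℂ)) • mulVecE (gdotR γ x) u
        + ((d:ℂ) * (s:ℂ) * (fR:ℂ)) • Ψ₀ := by
    rw [dirac]
    rw [Finset.sum_congr rfl fun j _ => hterm j]
    rw [Finset.sum_add_distrib]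
    congr 1
    · rw [gdotR_mulVecE, Finset.smul_sum]
      refine Finset.sum_congr rfl fun j _ => ?_
      rw [smul_smul]
    · rw [Finset.sum_const, Finset.card_univ, Fintype.card_fin]
      rw [← Nat.cast_smul_eq_nsmul ℂ, smul_smul]
      congr 1
      ring
  -- RHS computation
  have hAapp : ∀ k : Fin d, curlyA d x k
      = (d:ℝ) * hR * ((if (k:ℕ) = 0 then 1 - r2 else 0) + 2 * x z * x k + 2 * Sv k) := by
    intro k
    simp only [curlyA, WithLp.equiv_symm_apply, PiLp.toLp_apply]
    rfl
  have hcoef : ∀ k : Fin d, ((curlyA d x k : ℝ):ℂ)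
      = ((d:ℂ) * (hR:ℂ)) * ((if k = z then 1 - (r2:ℂ) else 0)
          + 2 * (x z:ℂ) * (x k:ℂ) + 2 * (Sv k:ℂ)) := by
    intro k
    rw [hAapp k]
    by_cases hk : (k:ℕ) = 0
    · have : k = z := Fin.ext hk
      rw [if_pos hk, if_pos this]
      push_cast
      ring
    · have : k ≠ z := fun h => hk (by rw [h])
      rw [if_neg hk, if_neg this]
      push_cast
      ring
  have hRHSsum : mulVecE (gdotR γ (curlyA d x)) u
      = ((d:ℂ) * (hR:ℂ)) • ((1 - (r2:ℂ)) • mulVecE (γ z) u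
          + (2 * (x z:ℂ)) • mulVecE (gdotR γ x) u + (2:ℂ) • mulVecE Smat u) := by
    rw [gdotR_mulVecE]
    have hterm2 : ∀ k : Fin d, ((curlyA d x k : ℝ):ℂ) • mulVecE (γ k) u
        = ((d:ℂ) * (hR:ℂ)) • ((if k = z then (1 - (r2:ℂ)) else 0) • mulVecE (γ k) u
            + (2 * (x z:ℂ) * (x k:ℂ)) • mulVecE (γ k) u
            + (2 * (Sv k:ℂ)) • mulVecE (γ k) u) := by
      intro k
      rw [hcoef k]
      module
    rw [Finset.sum_congr rfl fun k _ => hterm2 k]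
    rw [← Finset.smul_sum]
    congr 1
    rw [Finset.sum_add_distrib, Finset.sum_add_distrib]
    congr 1
    congr 1
    · rw [Finset.sum_eq_single z]
      · rw [if_pos rfl]
      · intro k _ hk; rw [if_neg hk, zero_smul]
      · simp
    · rw [gdotR_mulVecE, Finset.smul_sum]
      refine Finset.sum_congr rfl fun k _ => ?_
      rw [smul_smul]
    · rw [hSmat, gdotR_mulVecE, Finset.smul_sum]
      refine Finset.sum_congr rfl fun k _ => ?_
      rw [smul_smul, hSxEapp k]
  -- spinor expansions
  have hBu : mulVecE (gdotR γ x) u = Q + (Complex.I * (s:ℂ) * (r2:ℂ)) • Ψ₀ := by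
    rw [hu, mulVecE_addv, mulVecE_smulv, hBQ, ← hQ, smul_smul]
  have hγzu : mulVecE (γ z) u
      = (s:ℂ) • Ψ₀ + (Complex.I * (s:ℂ)) • (((x z:ℂ) * 2) • Ψ₀ - (s:ℂ) • Q) := by
    rw [hu, mulVecE_addv, mulVecE_smulv, hsP, hγ0Q]
  have hSu : mulVecE Smat u
      = (Complex.I • Q - (Complex.I * (x z:ℂ) * (s:ℂ)) • Ψ₀)
        + (Complex.I * (s:ℂ)) • (-((Complex.I * (r2:ℂ)) • Ψ₀)
            + (Complex.I * (x z:ℂ) * (s:ℂ)) • Q) := by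
    rw [hu, mulVecE_addv, mulVecE_smulv, hSP, hSQ]
  -- final assembly
  rw [hdirac, hΨx, hBu]
  rw [show mulVecE (gdotR γ (curlyA d x)) (fR • u) = (fR:ℂ) • mulVecE (gdotR γ (curlyA d x)) u
    from by rw [mulVecE_real_smulv, Complex.coe_smul]]
  rw [hRHSsum, hγzu, hBu, hSu]
  rw [hfgc]
  match_scalars
  · linear_combination
      ((1 + (r2:ℂ)) * (gR:ℂ) * (d:ℂ) * (hR:ℂ) * (Complex.I * (1 - (r2:ℂ)) + 2 * ((x z : ℝ):ℂ))) * hss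
      + (-(Complex.I * (d:ℂ) * (gR:ℂ))) * hHc
      + (-((1 + (r2:ℂ)) * (gR:ℂ) * (d:ℂ) * (hR:ℂ) * 2 * ((x z : ℝ):ℂ) * (s:ℂ) * (s:ℂ))) * Complex.I_sq
  · linear_combination
      (-((d:ℂ) * (gR:ℂ) * (s:ℂ))) * hHc
      + ((d:ℂ) * (gR:ℂ) * (s:ℂ) * (r2:ℂ)
          + 2 * (s:ℂ) * (r2:ℂ) * (1 + (r2:ℂ)) * (gR:ℂ) * (d:ℂ) * (hR:ℂ)) * Complex.I_sq
end
end
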